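/- For the p-Cesàro matrix E with 1 < p ≤ 2, one has Σ_{v=1}^n |e_{vv} ê_{n,v+1}| = O(n^{-p}) as n → ∞. -/

import Mathlib

open Real Finset

lemma keyA {p x : ℝ} (hp : 1 ≤ p) (hx : 0 < x) :
    (x+1)^p - x^p ≤ p * (x+1)^p / (x+1) := by
  have hx1 : 0 < x + 1 := by linarith
  have hs : (-1 : ℝ) ≤ -(1/(x+1)) := by
    rw [neg_le_neg_iff, div_le_one hx1]; linarith
  have hB := one_add_mul_self_le_rpow_one_add hs hp
  have h1 : (1 : ℝ) + -(1/(x+1)) = x / (x+1) := by field_simp; ring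
  rw [h1, Real.div_rpow hx.le hx1.le] at hB
  have hP : (0:ℝ) < (x+1)^p := rpow_pos_of_pos hx1 p
  rw [le_div_iff₀ hP] at hB
  calc (x+1)^p - x^p ≤ (x+1)^p - (1 + p * -(1 / (x + 1))) * (x+1)^p := by linarith
    _ = p * (x+1)^p / (x+1) := by field_simp; ring

lemma keyB {q x : ℝ} (hq0 : 0 ≤ q) (hq1 : q ≤ 1) (hx : 0 < x) :
    x^q ≤ (x+1)^q - q * (x+1)^q / (x+1) := by
  have hx1 : 0 < x + 1 := by linarith
  have hs : (-1 : ℝ) ≤ -(1/(x+1)) := by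
    rw [neg_le_neg_iff, div_le_one hx1]; linarith
  have hB := rpow_one_add_le_one_add_mul_self hs hq0 hq1
  have h1 : (1 : ℝ) + -(1/(x+1)) = x / (x+1) := by field_simp; ring
  rw [h1, Real.div_rpow hx.le hx1.le] at hB
  have hP : (0:ℝ) < (x+1)^q := rpow_pos_of_pos hx1 q
  rw [div_le_iff₀ hP] at hB
  calc x^q ≤ (1 + q * -(1 / (x + 1))) * (x+1)^q := hB
    _ = (x+1)^q - q * (x+1)^q / (x+1) := by ring

lemma termA {p x : ℝ} (hp : 1 ≤ p) (hx : 0 < x) :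
    x^(-p) - (x+1)^(-p) ≤ p * x^(-p) / (x+1) := by
  have hx1 : 0 < x + 1 := by linarith
  have hA : (0:ℝ) < x^p := rpow_pos_of_pos hx p
  have hB : (0:ℝ) < (x+1)^p := rpow_pos_of_pos hx1 p
  have key := keyA hp hx
  rw [Real.rpow_neg hx.le, Real.rpow_neg hx1.le]
  have e1 : (x ^ p)⁻¹ - ((x+1) ^ p)⁻¹ = ((x+1)^p - x^p) / (x^p * (x+1)^p) := by
    field_simp
  have e2 : p * (x ^ p)⁻¹ / (x+1) = (p * (x+1)^p / (x+1)) / (x^p * (x+1)^p) := by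
    field_simp
  rw [e1, e2]
  gcongr

lemma termB {p x : ℝ} (hp1 : 1 < p) (hp2 : p ≤ 2) (hx : 0 < x) :
    (p-1) * (x+1)^(-p) ≤ x^(-(p-1)) - (x+1)^(-(p-1)) := by
  have hx1 : 0 < x + 1 := by linarith
  have hq0 : (0:ℝ) ≤ p - 1 := by linarith
  have hA : (0:ℝ) < x^(p-1) := rpow_pos_of_pos hx _
  have hB : (0:ℝ) < (x+1)^(p-1) := rpow_pos_of_pos hx1 _
  have hAB : x^(p-1) ≤ (x+1)^(p-1) :=
    Real.rpow_le_rpow hx.le (by linarith) hq0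
  have key := keyB hq0 (by linarith : p - 1 ≤ 1) hx
  have ep : (x+1)^p = (x+1)^(p-1) * (x+1) := by
    rw [← Real.rpow_add_one hx1.ne']; ring_nf
  rw [Real.rpow_neg hx.le, Real.rpow_neg hx1.le, Real.rpow_neg hx1.le, ep]
  have e1 : (x ^ (p-1))⁻¹ - ((x+1) ^ (p-1))⁻¹
      = ((x+1)^(p-1) - x^(p-1)) / (x^(p-1) * (x+1)^(p-1)) := by field_simp
  have e2 : (p-1) * ((x+1)^(p-1) * (x+1))⁻¹
      = ((p-1) * x^(p-1) / (x+1)) / (x^(p-1) * (x+1)^(p-1)) := by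
    field_simp
  rw [e1, e2]
  have h3 : (p-1) * x^(p-1) / (x+1) ≤ (p-1) * (x+1)^(p-1) / (x+1) := by gcongr
  have h4 : (p-1) * x^(p-1) / (x+1) ≤ (x+1)^(p-1) - x^(p-1) := by linarith
  gcongr

lemma sumB {p : ℝ} (hp1 : 1 < p) (hp2 : p ≤ 2) (n : ℕ) :
    ∑ v ∈ Finset.Icc 1 n, ((v:ℝ)+1)^(-p) ≤ 1/(p-1) := by
  have hq : (0:ℝ) < p - 1 := by linarith
  set g : ℕ → ℝ := fun v => ((v:ℝ))^(-(p-1)) with hg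
  have hstep : ∀ v ∈ Finset.Icc 1 n, (p-1) * ((v:ℝ)+1)^(-p) ≤ g v - g (v+1) := by
    intro v hv
    have hv1 : 1 ≤ v := (Finset.mem_Icc.mp hv).1
    have hx : (0:ℝ) < (v:ℝ) := by exact_mod_cast hv1
    have := termB hp1 hp2 hx
    simpa [hg] using this
  have htel : ∀ m : ℕ, ∑ v ∈ Finset.Icc 1 m, (g v - g (v+1)) = g 1 - g (m+1) := by
    intro m
    induction m with
    | zero => simp
    | succ k ih =>
      rw [Finset.sum_Icc_succ_top (by omega : 1 ≤ k + 1), ih]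
      ring
  have hsum : (p-1) * ∑ v ∈ Finset.Icc 1 n, ((v:ℝ)+1)^(-p) ≤ g 1 - g (n+1) := by
    rw [Finset.mul_sum, ← htel n]
    exact Finset.sum_le_sum hstep
  have hg1 : g 1 = 1 := by simp [hg]
  have hgn : 0 ≤ g (n+1) := Real.rpow_nonneg (by positivity) _
  rw [le_div_iff₀ hq, mul_comm]
  linarith

theorem pCesaro_diag_hat_sum_bound (p : ℝ) (hp1 : 1 < p) (hp2 : p ≤ 2)
    (e ehat : ℕ → ℕ → ℝ)
    (he : ∀ n i : ℕ, i ≤ n → e n i = 1 / ((n : ℝ) + 1) ^ p)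
    (hehat : ∀ n v : ℕ, 1 ≤ n → v ≤ n - 1 →
      ehat n v = ((n : ℝ) - v + 1) / ((n : ℝ) + 1) ^ p - ((n : ℝ) - v) / (n : ℝ) ^ p)
    (hehatd : ∀ n : ℕ, ehat n n = e n n)
    (hehat0 : ∀ n v : ℕ, n < v → ehat n v = 0) :
    ∃ C : ℝ, ∀ n : ℕ, 1 ≤ n →
      ∑ v ∈ Finset.Icc 1 n, |e v v * ehat n (v + 1)| ≤ C * (n : ℝ) ^ (-p) := by
  refine ⟨(p+1) * (1/(p-1)), fun n hn => ?_⟩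
  have hx : (0:ℝ) < (n:ℝ) := by exact_mod_cast hn
  have hx1 : (0:ℝ) < (n:ℝ) + 1 := by linarith
  have hnp : (0:ℝ) < (n:ℝ)^p := rpow_pos_of_pos hx p
  have hnp1 : (0:ℝ) < ((n:ℝ)+1)^p := rpow_pos_of_pos hx1 p
  have hnneg : (0:ℝ) ≤ (n:ℝ)^(-p) := Real.rpow_nonneg hx.le _
  have hEB : ∀ v ∈ Finset.Icc 1 n, |ehat n (v+1)| ≤ (p+1) * (n:ℝ)^(-p) := by
    intro v hv
    obtain ⟨hv1, hvn⟩ := Finset.mem_Icc.mp hv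
    have hrhs : 0 ≤ (p+1) * (n:ℝ)^(-p) := by positivity
    rcases lt_or_ge n (v+1) with h | h
    · rw [hehat0 n (v+1) h, abs_zero]; exact hrhs
    rcases eq_or_lt_of_le h with heq | hlt
    · -- v + 1 = n
      rw [heq, hehatd, he n n le_rfl]
      rw [abs_of_nonneg (by positivity)]
      have h2 : (n:ℝ)^p ≤ ((n:ℝ)+1)^p :=
        Real.rpow_le_rpow hx.le (by linarith) (by linarith)
      have h3 : (1:ℝ) / ((n:ℝ) + 1) ^ p ≤ (n:ℝ)^(-p) := by
        rw [Real.rpow_neg hx.le, ← one_div]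
        exact one_div_le_one_div_of_le hnp h2
      nlinarith
    · -- v + 1 ≤ n - 1
      have hle : v + 1 ≤ n - 1 := by omega
      rw [hehat n (v+1) hn hle]
      have hwx : (v:ℝ) + 2 ≤ (n:ℝ) := by
        have h5 : v + 2 ≤ n := by omega
        exact_mod_cast h5
      have hw0 : (0:ℝ) ≤ (v:ℝ) := Nat.cast_nonneg v
      have hval : ((n:ℝ) - ↑(v+1) + 1) / ((n:ℝ) + 1) ^ p - ((n:ℝ) - ↑(v+1)) / (n:ℝ) ^ p
          = ((n:ℝ) - (v:ℝ)) * (((n:ℝ)+1)^(-p) - (n:ℝ)^(-p)) + (n:ℝ)^(-p) := by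
        push_cast
        rw [Real.rpow_neg hx.le, Real.rpow_neg hx1.le]
        field_simp
        ring
      rw [hval]
      have hmono : ((n:ℝ)+1)^(-p) ≤ (n:ℝ)^(-p) := by
        rw [Real.rpow_neg hx.le, Real.rpow_neg hx1.le]
        exact inv_anti₀ hnp (Real.rpow_le_rpow hx.le (by linarith) (by linarith))
      have hdiff := termA hp1.le hx
      have habs : |((n:ℝ) - (v:ℝ)) * (((n:ℝ)+1)^(-p) - (n:ℝ)^(-p)) + (n:ℝ)^(-p)|
          ≤ ((n:ℝ) - (v:ℝ)) * ((n:ℝ)^(-p) - ((n:ℝ)+1)^(-p)) + (n:ℝ)^(-p) := by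
        refine (abs_add_le _ _).trans ?_
        rw [abs_mul, abs_of_nonneg (by linarith : (0:ℝ) ≤ (n:ℝ) - (v:ℝ)),
          abs_of_nonpos (by linarith : ((n:ℝ)+1)^(-p) - (n:ℝ)^(-p) ≤ 0),
          abs_of_nonneg hnneg, neg_sub]
      refine habs.trans ?_
      have h4 : ((n:ℝ) - (v:ℝ)) * ((n:ℝ)^(-p) - ((n:ℝ)+1)^(-p))
          ≤ (n:ℝ) * ((n:ℝ)^(-p) - ((n:ℝ)+1)^(-p)) := by
        apply mul_le_mul_of_nonneg_right (by linarith) (by linarith)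
      have h5 : (n:ℝ) * ((n:ℝ)^(-p) - ((n:ℝ)+1)^(-p)) ≤ (n:ℝ) * (p * (n:ℝ)^(-p) / ((n:ℝ)+1)) :=
        mul_le_mul_of_nonneg_left hdiff hx.le
      have h6 : (n:ℝ) * (p * (n:ℝ)^(-p) / ((n:ℝ)+1)) ≤ p * (n:ℝ)^(-p) := by
        rw [mul_div_assoc'] at *
        rw [div_le_iff₀ hx1]
        nlinarith
      linarith
  calc ∑ v ∈ Finset.Icc 1 n, |e v v * ehat n (v + 1)|
      ≤ ∑ v ∈ Finset.Icc 1 n, ((v:ℝ)+1)^(-p) * ((p+1) * (n:ℝ)^(-p)) := by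
        apply Finset.sum_le_sum
        intro v hv
        rw [abs_mul, he v v le_rfl, abs_of_nonneg (by positivity : (0:ℝ) ≤ 1 / ((v:ℝ)+1)^p)]
        have hvp : (1:ℝ) / ((v:ℝ)+1)^p = ((v:ℝ)+1)^(-p) := by
          rw [Real.rpow_neg (by positivity), one_div]
        rw [hvp]
        exact mul_le_mul_of_nonneg_left (hEB v hv) (Real.rpow_nonneg (by positivity) _)
    _ = (∑ v ∈ Finset.Icc 1 n, ((v:ℝ)+1)^(-p)) * ((p+1) * (n:ℝ)^(-p)) := by
        rw [Finset.sum_mul]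
    _ ≤ (1/(p-1)) * ((p+1) * (n:ℝ)^(-p)) := by
        apply mul_le_mul_of_nonneg_right (sumB hp1 hp2 n) (by positivity)
    _ = (p+1) * (1/(p-1)) * (n:ℝ)^(-p) := by ring
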